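/- Let k be an even positive integer and n a multiple of k. For a skew-symmetric function f on [n]^k, the hyperpfaffian Pf(f) = Σ_τ (-1)^τ · Π_{i=1}^{n/k} f(B_i) (sum over partitions τ = {B_1,...,B_{n/k}} of [n] into blocks of size k) satisfies: in the exterior algebra Λ on generators t_1,...,t_n, (Σ_S f(S)·t_S)^{n/k} = (n/k)! · Pf(f) · t_{[n]}, where the sum is over all k-element subsets S of [n], t_S is the wedge product of the t_s for s ∈ S in increasing order, f(S) is f evaluated on the elements of S in increasing order, and (-1)^τ is the sign of the permutation obtained by listing the blocks' elements (each block in increasing order, blocks ordered by their minima or any fixed ordering consistent with the definition). -/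

import Mathlib

open Finset Equiv MvPolynomial

open scoped Classical

noncomputable section

/-- The position of the `j`-th element of the `i`-th block. -/
def bpos (m k : ℕ) (i : Fin m) (j : Fin k) : Fin (m * k) :=
  ⟨k * (i : ℕ) + (j : ℕ), by
    have hi := i.isLt
    have hj := j.isLt
    calc k * (i : ℕ) + (j : ℕ) < k * (i : ℕ) + k := by omega
      _ = k * ((i : ℕ) + 1) := by ring
      _ ≤ k * m := Nat.mul_le_mul_left k hi
      _ = m * k := Nat.mul_comm k m⟩

/-- Each block of the (oriented) partition is listed in increasing order. -/
def IsBlockMono (m k : ℕ) (π : Equiv.Perm (Fin (m * k))) : Prop :=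
  ∀ i : Fin m, StrictMono fun j : Fin k => π (bpos m k i j)

/-- The blocks are listed in increasing order of their first elements. -/
def IsLeadMono (m k : ℕ) (π : Equiv.Perm (Fin (m * k))) : Prop :=
  ∀ (i i' : Fin m) (j : Fin k), i < i' →
    π (bpos m k i ⟨0, j.pos⟩) < π (bpos m k i' ⟨0, j.pos⟩)

/-- Canonical representative of a set partition of `[n]`, `n = m*k`, into `m` blocks of
size `k`: each block increasing and blocks ordered by their minima. -/
def IsPartRep (m k : ℕ) (π : Equiv.Perm (Fin (m * k))) : Prop :=
  IsBlockMono m k π ∧ IsLeadMono m k π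

/-- A `k`-ary function is skew-symmetric. -/
def IsSkewFun {k : ℕ} {α R : Type*} [CommRing R] (f : (Fin k → α) → R) : Prop :=
  ∀ (σ : Equiv.Perm (Fin k)) (v : Fin k → α),
    f (v ∘ σ) = (Equiv.Perm.sign σ : ℤ) • f v

/-- The hyperpfaffian of a skew-symmetric `k`-ary function on `[m*k]`:
the signed sum over all set partitions of `[m*k]` into `m` blocks of size `k`. -/
def hyperPf (m k : ℕ) {R : Type*} [CommRing R]
    (f : (Fin k → Fin (m * k)) → R) : R :=
  ∑ π ∈ Finset.univ.filter (IsPartRep m k),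
    (Equiv.Perm.sign π : ℤ) • ∏ i : Fin m, f fun j => π (bpos m k i j)

/-- A polynomial in `k` variables is skew-symmetric. -/
def IsSkewPoly {k : ℕ} {R : Type*} [CommRing R] (f : MvPolynomial (Fin k) R) : Prop :=
  ∀ σ : Equiv.Perm (Fin k),
    MvPolynomial.rename (⇑σ) f = (Equiv.Perm.sign σ : ℤ) • f

/-- The hyperpfaffian `Pf (f(x_S))` of the values of a polynomial `f` in `k` variables
at the variables indexed by the `k`-subsets `S` of `[m*k]`. -/
def hyperPfPoly (m k : ℕ) {R : Type*} [CommRing R]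
    (f : MvPolynomial (Fin k) R) : MvPolynomial (Fin (m * k)) R :=
  ∑ π ∈ Finset.univ.filter (IsPartRep m k),
    (Equiv.Perm.sign π : ℤ) •
      ∏ i : Fin m, MvPolynomial.rename (fun j => π (bpos m k i j)) f

/-- The Vandermonde product. -/
def vand (n : ℕ) (R : Type*) [CommRing R] : MvPolynomial (Fin n) R :=
  ∏ p ∈ Finset.univ.filter (fun p : Fin n × Fin n => p.1 < p.2),
    (MvPolynomial.X p.2 - MvPolynomial.X p.1)

/-- The coefficient of `f` at the monomial with exponent vector `r`. -/
def coeffOf {k : ℕ} {R : Type*} [CommRing R] (f : MvPolynomial (Fin k) R)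
    (r : Fin k → ℕ) : R :=
  MvPolynomial.coeff (Finsupp.equivFunOnFinite.symm r) f

/-- Membership in `Γ_{n,k}`: a strictly increasing composition of `k/2*(n-1)`
into `k` distinct nonnegative parts. -/
def InGamma (n k : ℕ) (r : Fin k → ℕ) : Prop :=
  StrictMono r ∧ ∑ j, r j = k / 2 * (n - 1)

/-- Canonical representative of an element `β` of `R_{n,k}`, encoded as a permutation `e` of
`Fin (m*k)` (identified with `{0,…,n-1}`): the blocks of `e` are the compositions of `β`,
each block is increasing and sums to `k/2*(n-1)`, and the blocks are ordered canonically. -/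
def IsWeightRep (m k : ℕ) (e : Equiv.Perm (Fin (m * k))) : Prop :=
  IsPartRep m k e ∧
    ∀ i : Fin m, ∑ j : Fin k, ((e (bpos m k i j)) : ℕ) = k / 2 * (m * k - 1)

/-- The weight of the element `x` of `[m*k]` in the weighted oriented partition with
oriented partition (representative) `π` and weight vectors `w`. -/
def wtOf (m k : ℕ) (π : Equiv.Perm (Fin (m * k))) (w : Fin m → Fin k → ℕ) :
    Fin (m * k) → ℕ := fun x =>
  w ⟨((π.symm x : Fin (m*k)) : ℕ) / k, Nat.div_lt_of_lt_mul (lt_of_lt_of_le (π.symm x).isLt (le_of_eq (Nat.mul_comm m k)))⟩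
    ⟨((π.symm x : Fin (m*k)) : ℕ) % k, Nat.mod_lt _ (by
      have ht := (π.symm x).isLt
      have hk : k ≠ 0 := by rintro rfl; omega
      omega)⟩

end
/-- The generator `t_s` of the exterior algebra. -/
def tGen (n : ℕ) (R : Type*) [CommRing R] (s : Fin n) : ExteriorAlgebra R (Fin n → R) :=
  ExteriorAlgebra.ι R (Pi.single s 1)

/-- The wedge product `t_S` of the generators indexed by `S`, in increasing order. -/
def tProd (n : ℕ) (R : Type*) [CommRing R] (S : Finset (Fin n)) :
    ExteriorAlgebra R (Fin n → R) :=
  ((S.sort (· ≤ ·)).map (tGen n R)).prod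

/-- `f(S)`: the value of `f` on the elements of `S` listed in increasing order
(zero junk value if `S` does not have `k` elements). -/
def fVal {n k : ℕ} {R : Type*} [CommRing R] (f : (Fin k → Fin n) → R)
    (S : Finset (Fin n)) : R :=
  if h : S.card = k then f (fun j => (S.orderIsoOfFin h j : Fin n)) else 0

section HyperPfAux

variable {R : Type*} [CommRing R]

/-- Ordered product of exterior generators along a tuple of indices. -/
noncomputable def Pg (n N : ℕ) (R : Type*) [CommRing R] (u : Fin N → Fin n) :
    ExteriorAlgebra R (Fin n → R) :=
  ExteriorAlgebra.ιMulti R N fun a => Pi.single (u a) (1 : R)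

lemma Pg_eq_zero {n N : ℕ} (u : Fin N → Fin n) (h : ¬ Function.Injective u) :
    Pg n N R u = 0 := by
  simp only [Function.Injective, not_forall] at h
  obtain ⟨a, b, hab, hne⟩ := h
  exact AlternatingMap.map_eq_zero_of_eq _ _ (by rw [hab]) hne

lemma Pg_comp_perm {n N : ℕ} (u : Fin N → Fin n) (σ : Equiv.Perm (Fin N)) :
    Pg n N R (u ∘ σ) = Equiv.Perm.sign σ • Pg n N R u := by
  unfold Pg
  exact AlternatingMap.map_perm (ExteriorAlgebra.ιMulti R N (M := Fin n → R))
    (fun a => Pi.single (u a) (1 : R)) σ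

lemma tProd_eq_Pg {n N : ℕ} (S : Finset (Fin n)) (h : S.card = N) :
    tProd n R S = Pg n N R fun j => S.orderEmbOfFin h j := by
  rw [Pg, ExteriorAlgebra.ιMulti_apply]
  unfold tProd tGen
  apply congrArg
  apply List.ext_getElem
  · simp [h]
  · intro i h1 h2
    simp only [List.getElem_map, List.getElem_ofFn]
    rw [Finset.orderEmbOfFin_apply]
    rfl

lemma tProd_univ_eq (n : ℕ) :
    tProd n R (univ : Finset (Fin n)) = Pg n n R id := by
  have hc : (univ : Finset (Fin n)).card = n := by simp
  rw [tProd_eq_Pg (R := R) univ hc]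
  have h2 : (fun j => (univ : Finset (Fin n)).orderEmbOfFin hc j) = id := by
    symm
    exact Finset.orderEmbOfFin_unique hc (fun x => Finset.mem_univ x) strictMono_id
  rw [h2]

lemma Pg_perm {n : ℕ} (π : Equiv.Perm (Fin n)) :
    Pg n n R ⇑π = (Equiv.Perm.sign π : ℤ) • tProd n R (univ : Finset (Fin n)) := by
  have h : Pg n n R (id ∘ ⇑π) = Equiv.Perm.sign π • Pg n n R id := Pg_comp_perm id π
  simp only [Function.id_comp] at h
  rw [tProd_univ_eq, ← Units.smul_def]
  exact h

lemma prod_ofFn_blocks {A : Type*} [Monoid A] (k : ℕ) :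
    ∀ (m : ℕ) (f : Fin (m * k) → A),
      (List.ofFn fun i : Fin m =>
          (List.ofFn fun j : Fin k => f (finProdFinEquiv (i, j))).prod).prod
        = (List.ofFn f).prod := by
  intro m
  induction m with
  | zero =>
    intro f
    rw [List.ofFn_congr (Nat.zero_mul k) f]
    simp
  | succ m IH =>
    intro f
    have h1 : (m + 1) * k = m * k + k := Nat.succ_mul m k
    rw [List.ofFn_succ', List.prod_concat, List.ofFn_congr h1 f, List.ofFn_add,
      List.prod_append]
    congr 1
    · rw [← IH fun x : Fin (m * k) => f (Fin.cast h1.symm (Fin.castLE (Nat.le_add_right _ _) x))]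
      congr 1
    · apply congrArg
      apply congrArg
      funext j
      apply congrArg
      apply Fin.ext
      simp [finProdFinEquiv]
      ring

/-- Permuting the blocks wholesale. -/
noncomputable def blockPerm (m k : ℕ) (σ : Equiv.Perm (Fin m)) : Equiv.Perm (Fin (m * k)) :=
  (finProdFinEquiv (m := m) (n := k)).permCongr (Equiv.prodCongrLeft fun _ : Fin k => σ)

lemma bpos_eq_finProdFinEquiv {m k : ℕ} (i : Fin m) (j : Fin k) :
    bpos m k i j = finProdFinEquiv (i, j) := by
  apply Fin.ext
  simp [bpos, finProdFinEquiv]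
  omega

lemma blockPerm_apply {m k : ℕ} (σ : Equiv.Perm (Fin m)) (i : Fin m) (j : Fin k) :
    blockPerm m k σ (bpos m k i j) = bpos m k (σ i) j := by
  rw [bpos_eq_finProdFinEquiv, bpos_eq_finProdFinEquiv, blockPerm]
  simp [Equiv.permCongr_apply, Equiv.prodCongrLeft_apply]

lemma blockPerm_mul {m k : ℕ} (σ τ : Equiv.Perm (Fin m)) :
    blockPerm m k σ * blockPerm m k τ = blockPerm m k (σ * τ) := by
  apply Equiv.ext
  intro x
  obtain ⟨⟨i, j⟩, rfl⟩ := finProdFinEquiv.surjective x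
  rw [← bpos_eq_finProdFinEquiv]
  simp only [Equiv.Perm.mul_apply, blockPerm_apply]

lemma blockPerm_one {m k : ℕ} : blockPerm m k (1 : Equiv.Perm (Fin m)) = 1 := by
  apply Equiv.ext
  intro x
  obtain ⟨⟨i, j⟩, rfl⟩ := finProdFinEquiv.surjective x
  rw [← bpos_eq_finProdFinEquiv]
  simp only [blockPerm_apply, Equiv.Perm.one_apply]

lemma sign_blockPerm {m k : ℕ} (hk : Even k) (σ : Equiv.Perm (Fin m)) :
    Equiv.Perm.sign (blockPerm m k σ) = 1 := by
  rw [blockPerm, Equiv.Perm.sign_permCongr, Equiv.Perm.sign_prodCongrLeft]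
  rw [Finset.prod_const, Finset.card_univ, Fintype.card_fin]
  rcases Int.units_eq_one_or (Equiv.Perm.sign σ) with h | h <;> rw [h]
  · exact one_pow k
  · exact hk.neg_one_pow

/-- The concatenation of the increasing enumerations of the blocks. -/
noncomputable def blockFn {m k : ℕ} (r : Fin m → Finset (Fin (m * k))) :
    Fin (m * k) → Fin (m * k) := fun x =>
  if h : (r (finProdFinEquiv.symm x).1).card = k then
    (r (finProdFinEquiv.symm x).1).orderEmbOfFin h (finProdFinEquiv.symm x).2
  else x

lemma blockFn_apply {m k : ℕ} (r : Fin m → Finset (Fin (m * k))) (i : Fin m) (j : Fin k)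
    (h : (r i).card = k) : blockFn r (bpos m k i j) = (r i).orderEmbOfFin h j := by
  rw [bpos_eq_finProdFinEquiv, blockFn]
  simp only [Equiv.symm_apply_apply]
  rw [dif_pos h]

end HyperPfAux

set_option maxHeartbeats 1000000 in
theorem stmt0 (m k : ℕ) (hk : Even k) (hk0 : 0 < k) (R : Type*) [CommRing R]
    (f : (Fin k → Fin (m * k)) → R) (hf : IsSkewFun f) :
    (∑ S ∈ Finset.powersetCard k (Finset.univ : Finset (Fin (m * k))),
        fVal f S • tProd (m * k) R S) ^ m
      = ((m.factorial : R) * hyperPf m k f) • tProd (m * k) R Finset.univ := by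
  classical
  set pc : Finset (Finset (Fin (m * k))) :=
    Finset.powersetCard k (Finset.univ : Finset (Fin (m * k))) with hpc
  have hcard : ∀ r ∈ Fintype.piFinset fun _ : Fin m => pc, ∀ i, (r i).card = k := by
    intro r hr i
    exact (Finset.mem_powersetCard.mp (Fintype.mem_piFinset.mp hr i)).2
  have h1 : (∑ S ∈ pc, fVal f S • tProd (m * k) R S) ^ m
      = ∑ r ∈ Fintype.piFinset fun _ : Fin m => pc,
          (MultilinearMap.mkPiAlgebraFin R m (ExteriorAlgebra R (Fin (m * k) → R)))
            fun i => fVal f (r i) • tProd (m * k) R (r i) := by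
    have hconst := MultilinearMap.mkPiAlgebraFin_apply_const (R := R)
      (A := ExteriorAlgebra R (Fin (m * k) → R)) (n := m)
      (∑ S ∈ pc, fVal f S • tProd (m * k) R S)
    rw [← hconst]
    exact MultilinearMap.map_sum_finset _ (fun _ S => fVal f S • tProd (m * k) R S)
      fun _ => pc
  have h2 : ∀ r ∈ Fintype.piFinset fun _ : Fin m => pc,
      ((MultilinearMap.mkPiAlgebraFin R m (ExteriorAlgebra R (Fin (m * k) → R)))
          fun i => fVal f (r i) • tProd (m * k) R (r i))
        = (∏ i, fVal f (r i)) • Pg (m * k) (m * k) R (blockFn r) := by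
    intro r hr
    rw [MultilinearMap.map_smul_univ]
    congr 1
    rw [MultilinearMap.mkPiAlgebraFin_apply]
    have ht' : (fun i : Fin m => tProd (m * k) R (r i))
        = fun i : Fin m => (List.ofFn fun j : Fin k =>
            ExteriorAlgebra.ι R (Pi.single (blockFn r (finProdFinEquiv (i, j))) (1 : R))).prod := by
      funext i
      rw [tProd_eq_Pg (r i) (hcard r hr i), Pg, ExteriorAlgebra.ιMulti_apply]
      congr 1
      congr 1
      funext j
      rw [← bpos_eq_finProdFinEquiv i j, blockFn_apply r i j (hcard r hr i)]
    have hblocks := prod_ofFn_blocks (A := ExteriorAlgebra R (Fin (m * k) → R)) k m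
      (fun x => ExteriorAlgebra.ι R (Pi.single (blockFn r x) (1 : R)))
    calc (List.ofFn fun i => tProd (m * k) R (r i)).prod
        = (List.ofFn fun i : Fin m => (List.ofFn fun j : Fin k =>
            ExteriorAlgebra.ι R (Pi.single (blockFn r (finProdFinEquiv (i, j)))
              (1 : R))).prod).prod := by rw [ht']
      _ = (List.ofFn fun x : Fin (m * k) =>
            ExteriorAlgebra.ι R (Pi.single (blockFn r x) (1 : R))).prod :=
          hblocks
      _ = Pg (m * k) (m * k) R (blockFn r) := by rw [Pg, ExteriorAlgebra.ιMulti_apply]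
  have h3 : ∑ r ∈ Fintype.piFinset fun _ : Fin m => pc,
        (∏ i, fVal f (r i)) • Pg (m * k) (m * k) R (blockFn r)
      = ∑ r ∈ (Fintype.piFinset fun _ : Fin m => pc).filter
            fun r => Function.Injective (blockFn r),
          (∏ i, fVal f (r i)) • Pg (m * k) (m * k) R (blockFn r) := by
    symm
    apply Finset.sum_filter_of_ne
    intro r hr hne
    by_contra hni
    exact hne (by rw [Pg_eq_zero _ hni, smul_zero])
  set A : Equiv.Perm (Fin (m * k)) → ExteriorAlgebra R (Fin (m * k) → R) := fun π =>
    (((Equiv.Perm.sign π : ℤ) : R) * ∏ i, f fun j => π (bpos m k i j)) •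
      tProd (m * k) R Finset.univ with hA
  have hcardimg : ∀ π : Equiv.Perm (Fin (m * k)), IsBlockMono m k π → ∀ i : Fin m,
      (Finset.image (fun j : Fin k => π (bpos m k i j)) Finset.univ).card = k := by
    intro π hπ i
    rw [Finset.card_image_of_injective _ (hπ i).injective, Finset.card_univ, Fintype.card_fin]
  have hblockimg : ∀ (π : Equiv.Perm (Fin (m * k))) (hπ : IsBlockMono m k π) (i : Fin m),
      (fun j : Fin k => (Finset.image (fun j : Fin k => π (bpos m k i j))
          Finset.univ).orderEmbOfFin (hcardimg π hπ i) j) = fun j => π (bpos m k i j) :=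
    fun π hπ i => (Finset.orderEmbOfFin_unique (hcardimg π hπ i)
      (fun x => Finset.mem_image_of_mem _ (Finset.mem_univ x)) (hπ i)).symm
  have hblockFn_perm : ∀ (π : Equiv.Perm (Fin (m * k))), IsBlockMono m k π →
      blockFn (fun i => Finset.image (fun j : Fin k => π (bpos m k i j)) Finset.univ) = ⇑π := by
    intro π hπ
    funext x
    obtain ⟨⟨i, j⟩, rfl⟩ := finProdFinEquiv.surjective x
    rw [← bpos_eq_finProdFinEquiv, blockFn_apply _ i j (hcardimg π hπ i)]
    exact congrFun (hblockimg π hπ i) j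
  set Φ : (Fin m → Finset (Fin (m * k))) → Equiv.Perm (Fin (m * k)) := fun r =>
    if h : Function.Injective (blockFn r) then
      Equiv.ofBijective (blockFn r) (Finite.injective_iff_bijective.mp h)
    else 1 with hΦ
  have hΦ_coe : ∀ r, Function.Injective (blockFn r) → ⇑(Φ r) = blockFn r := by
    intro r h
    rw [hΦ]
    simp only [dif_pos h]
    rfl
  have h4 : ∑ r ∈ (Fintype.piFinset fun _ : Fin m => pc).filter
        (fun r => Function.Injective (blockFn r)),
        (∏ i, fVal f (r i)) • Pg (m * k) (m * k) R (blockFn r)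
      = ∑ π ∈ Finset.univ.filter (IsBlockMono m k), A π := by
    apply Finset.sum_nbij' (i := Φ)
      (j := fun π => fun i : Fin m => Finset.image (fun j : Fin k => π (bpos m k i j))
        Finset.univ)
    · intro r hr
      obtain ⟨hr1, hr2⟩ := Finset.mem_filter.mp hr
      refine Finset.mem_filter.mpr ⟨Finset.mem_univ _, ?_⟩
      intro i
      have heq : (fun j : Fin k => (Φ r) (bpos m k i j))
          = fun j => (r i).orderEmbOfFin (hcard r hr1 i) j := by
        funext j
        rw [congrFun (hΦ_coe r hr2) _, blockFn_apply r i j (hcard r hr1 i)]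
      rw [heq]
      exact fun a b hab => ((r i).orderEmbOfFin (hcard r hr1 i)).strictMono hab
    · intro π hπ
      have hbm : IsBlockMono m k π := (Finset.mem_filter.mp hπ).2
      refine Finset.mem_filter.mpr ⟨?_, ?_⟩
      · refine Fintype.mem_piFinset.mpr fun i => ?_
        exact Finset.mem_powersetCard.mpr ⟨Finset.subset_univ _, hcardimg π hbm i⟩
      · rw [hblockFn_perm π hbm]
        exact π.injective
    · intro r hr
      obtain ⟨hr1, hr2⟩ := Finset.mem_filter.mp hr
      funext i
      have heq : (fun j : Fin k => (Φ r) (bpos m k i j))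
          = fun j => (r i).orderEmbOfFin (hcard r hr1 i) j := by
        funext j
        rw [congrFun (hΦ_coe r hr2) _, blockFn_apply r i j (hcard r hr1 i)]
      rw [heq]
      apply Finset.coe_injective
      rw [Finset.coe_image, Finset.coe_univ, Set.image_univ, Finset.range_orderEmbOfFin]
    · intro π hπ
      have hbm : IsBlockMono m k π := (Finset.mem_filter.mp hπ).2
      have hinj : Function.Injective (blockFn fun i =>
          Finset.image (fun j : Fin k => π (bpos m k i j)) Finset.univ) := by
        rw [hblockFn_perm π hbm]
        exact π.injective
      apply Equiv.ext
      intro x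
      rw [congrFun (hΦ_coe _ hinj) x, congrFun (hblockFn_perm π hbm) x]
    · intro r hr
      obtain ⟨hr1, hr2⟩ := Finset.mem_filter.mp hr
      have hPg : Pg (m * k) (m * k) R (blockFn r)
          = (Equiv.Perm.sign (Φ r) : ℤ) • tProd (m * k) R Finset.univ := by
        rw [← hΦ_coe r hr2, Pg_perm]
      have hc' : ∀ i : Fin m, fVal f (r i) = f fun j => (Φ r) (bpos m k i j) := by
        intro i
        simp only [fVal]
        rw [dif_pos (hcard r hr1 i)]
        congr 1
        funext j
        rw [Finset.coe_orderIsoOfFin_apply, ← blockFn_apply r i j (hcard r hr1 i),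
          ← congrFun (hΦ_coe r hr2) _]
      rw [hA]
      simp only []
      rw [hPg, Finset.prod_congr rfl fun i _ => hc' i, mul_smul, Int.cast_smul_eq_zsmul,
        smul_comm]
  have hlead_inj : ∀ π : Equiv.Perm (Fin (m * k)),
      Function.Injective fun i : Fin m => π (bpos m k i ⟨0, hk0⟩) := by
    intro π i i' h
    have h2 := π.injective h
    have hval := congrArg Fin.val h2
    simp only [bpos] at hval
    apply Fin.ext
    exact Nat.eq_of_mul_eq_mul_left hk0 (by omega)
  have hlead_mul : ∀ (π : Equiv.Perm (Fin (m * k))) (σ : Equiv.Perm (Fin m)),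
      (fun i : Fin m => (π * blockPerm m k σ) (bpos m k i ⟨0, hk0⟩))
        = (fun i : Fin m => π (bpos m k i ⟨0, hk0⟩)) ∘ ⇑σ := by
    intro π σ
    funext i
    simp only [Equiv.Perm.mul_apply, blockPerm_apply, Function.comp]
  have hlead_strict : ∀ p : Equiv.Perm (Fin (m * k)), IsPartRep m k p →
      StrictMono fun i : Fin m => p (bpos m k i ⟨0, hk0⟩) := by
    intro p hp i i' hii
    exact hp.2 i i' ⟨0, hk0⟩ hii
  have hbm_mul : ∀ (π : Equiv.Perm (Fin (m * k))), IsBlockMono m k π →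
      ∀ σ : Equiv.Perm (Fin m), IsBlockMono m k (π * blockPerm m k σ) := by
    intro π hπ σ i
    have heq : (fun j : Fin k => (π * blockPerm m k σ) (bpos m k i j))
        = fun j => π (bpos m k (σ i) j) := by
      funext j
      rw [Equiv.Perm.mul_apply, blockPerm_apply]
    rw [heq]
    exact hπ (σ i)
  have h5 : ∑ π ∈ Finset.univ.filter (IsBlockMono m k), A π
      = ∑ q ∈ (Finset.univ.filter (IsPartRep m k)) ×ˢ
            (Finset.univ : Finset (Equiv.Perm (Fin m))),
          A (q.1 * blockPerm m k q.2) := by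
    apply Finset.sum_nbij'
      (i := fun π => (π * blockPerm m k (Tuple.sort fun i : Fin m => π (bpos m k i ⟨0, hk0⟩)),
        (Tuple.sort fun i : Fin m => π (bpos m k i ⟨0, hk0⟩))⁻¹))
      (j := fun q => q.1 * blockPerm m k q.2)
    · intro π hπ
      have hbm : IsBlockMono m k π := (Finset.mem_filter.mp hπ).2
      refine Finset.mem_product.mpr
        ⟨Finset.mem_filter.mpr ⟨Finset.mem_univ _, ?_, ?_⟩, Finset.mem_univ _⟩
      · exact hbm_mul π hbm _
      · have hmono : Monotone fun i : Fin m =>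
            (π * blockPerm m k (Tuple.sort fun i : Fin m => π (bpos m k i ⟨0, hk0⟩)))
              (bpos m k i ⟨0, hk0⟩) := by
          rw [hlead_mul]
          exact Tuple.monotone_sort _
        have hinj : Function.Injective fun i : Fin m =>
            (π * blockPerm m k (Tuple.sort fun i : Fin m => π (bpos m k i ⟨0, hk0⟩)))
              (bpos m k i ⟨0, hk0⟩) := by
          rw [hlead_mul]
          exact (hlead_inj π).comp (Tuple.sort _).injective
        have hs := hmono.strictMono_of_injective hinj
        intro i i' j hii
        exact hs hii
    · intro q hq
      have hpr : IsPartRep m k q.1 := (Finset.mem_filter.mp (Finset.mem_product.mp hq).1).2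
      exact Finset.mem_filter.mpr ⟨Finset.mem_univ _, hbm_mul q.1 hpr.1 q.2⟩
    · intro π hπ
      have hg : Tuple.sort (fun i : Fin m => π (bpos m k i ⟨0, hk0⟩))
          * (Tuple.sort fun i : Fin m => π (bpos m k i ⟨0, hk0⟩))⁻¹ = 1 := by group
      rw [mul_assoc, blockPerm_mul, hg, blockPerm_one, mul_one]
    · rintro ⟨p, σ⟩ hq
      have hpr : IsPartRep m k p :=
        (Finset.mem_filter.mp (Finset.mem_product.mp hq).1).2
      have hsort : (Tuple.sort fun i : Fin m =>
          (p * blockPerm m k σ) (bpos m k i ⟨0, hk0⟩)) = σ⁻¹ := by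
        have hg' := hlead_mul p σ
        have hmono1 := Tuple.monotone_sort fun i : Fin m =>
          (p * blockPerm m k σ) (bpos m k i ⟨0, hk0⟩)
        have hmono2 : Monotone ((fun i : Fin m =>
            (p * blockPerm m k σ) (bpos m k i ⟨0, hk0⟩)) ∘ ⇑σ⁻¹) := by
          have hcomp : ((fun i : Fin m => (p * blockPerm m k σ) (bpos m k i ⟨0, hk0⟩)) ∘ ⇑σ⁻¹)
              = fun i : Fin m => p (bpos m k i ⟨0, hk0⟩) := by
            rw [hg']
            funext x
            simp
          rw [hcomp]
          exact (hlead_strict p hpr).monotone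
        have heq := Tuple.unique_monotone hmono1 hmono2
        have hginj : Function.Injective fun i : Fin m =>
            (p * blockPerm m k σ) (bpos m k i ⟨0, hk0⟩) := by
          rw [hg']
          exact (hlead_inj p).comp σ.injective
        apply Equiv.ext
        intro x
        exact hginj (congrFun heq x)
      refine Prod.ext ?_ ?_
      · show p * blockPerm m k σ * blockPerm m k _ = p
        have hσ : σ * σ⁻¹ = 1 := by group
        rw [hsort, mul_assoc, blockPerm_mul, hσ, blockPerm_one, mul_one]
      · show (Tuple.sort fun i : Fin m => (p * blockPerm m k σ) (bpos m k i ⟨0, hk0⟩))⁻¹ = σ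
        rw [hsort, inv_inv]
    · intro π hπ
      have hg : Tuple.sort (fun i : Fin m => π (bpos m k i ⟨0, hk0⟩))
          * (Tuple.sort fun i : Fin m => π (bpos m k i ⟨0, hk0⟩))⁻¹ = 1 := by group
      show A π = A (π * blockPerm m k _ * blockPerm m k _)
      rw [mul_assoc, blockPerm_mul, hg, blockPerm_one, mul_one]
  have h6 : ∑ q ∈ (Finset.univ.filter (IsPartRep m k)) ×ˢ
        (Finset.univ : Finset (Equiv.Perm (Fin m))),
        A (q.1 * blockPerm m k q.2)
      = ∑ p ∈ Finset.univ.filter (IsPartRep m k), m.factorial • A p := by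
    rw [Finset.sum_product]
    apply Finset.sum_congr rfl
    intro p _
    have hAq : ∀ σ : Equiv.Perm (Fin m), A (p * blockPerm m k σ) = A p := by
      intro σ
      have hsign : Equiv.Perm.sign (p * blockPerm m k σ) = Equiv.Perm.sign p := by
        rw [map_mul, sign_blockPerm hk, mul_one]
      have hprod : (∏ i, f fun j => (p * blockPerm m k σ) (bpos m k i j))
          = ∏ i, f fun j => p (bpos m k i j) := by
        rw [← Equiv.prod_comp σ fun i => f fun j => p (bpos m k i j)]
        apply Finset.prod_congr rfl
        intro i _
        apply congrArg
        funext j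
        rw [Equiv.Perm.mul_apply, blockPerm_apply]
      rw [hA]
      simp only []
      rw [hsign, hprod]
    rw [Finset.sum_congr rfl fun σ _ => hAq σ, Finset.sum_const, Finset.card_univ,
      Fintype.card_perm, Fintype.card_fin]
  rw [h1, Finset.sum_congr rfl h2, h3, h4, h5, h6]
  unfold hyperPf
  rw [Finset.mul_sum, Finset.sum_smul]
  apply Finset.sum_congr rfl
  intro p _
  rw [hA]
  simp only []
  rw [zsmul_eq_mul, ← Nat.cast_smul_eq_nsmul R, smul_smul]
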